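/- arXiv:1512.06905 — 5 statements merged into one kernel-verified Lean document; each statement's English description precedes it below -/
import Mathlib

section
/- Let f, g¹,…,g^m : [0,T] × ℝ^d → ℝ^d satisfy the global monotonicity condition ⟨f(t,x₁)-f(t,x₂), x₁-x₂⟩ + η ∑_{r=1}^m |g^r(t,x₁)-g^r(t,x₂)|² ≤ L|x₁-x₂|², where L > 0 and η > 1/2, and suppose f satisfies the local Lipschitz bound |f(t,x₁)-f(t,x₂)| ≤ L(1+|x₁|+|x₂|)^{q-1}|x₁-x₂| with q ≥ 2. Fix α ∈ (0, 1/(2(q-1))] and δ ∈ (0,1], and let x° = min(1, δ^{-α}|x|^{-1})x. Then there exists a constant C depending only on L such that for all t ∈ [0,T] and x₁, x₂ ∈ ℝ^d: |x₁° - x₂° + δ(f(t,x₁°) - f(t,x₂°))|² + 2ηδ ∑_{r=1}^m |g^r(t,x₁°) - g^r(t,x₂°)|² ≤ (1 + Cδ)|x₁ - x₂|². -/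
open scoped RealInnerProductSpace

/-- Projection of `x ∈ ℝ^d` onto the closed ball of radius `δ^(-α)`. -/
noncomputable def ballProj {d : ℕ} (δ α : ℝ) (x : EuclideanSpace ℝ (Fin d)) :
    EuclideanSpace ℝ (Fin d) :=
  min 1 (δ ^ (-α) * ‖x‖⁻¹) • x

lemma ballProj_norm_le {d : ℕ} {δ α : ℝ} (hδ : 0 < δ) (x : EuclideanSpace ℝ (Fin d)) :
    ‖ballProj δ α x‖ ≤ δ ^ (-α) := by
  have hR : 0 < δ ^ (-α) := Real.rpow_pos_of_pos hδ _
  rcases eq_or_ne x 0 with rfl | hx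
  · simp [ballProj, hR.le]
  · have hxn : 0 < ‖x‖ := norm_pos_iff.mpr hx
    have hc : (0:ℝ) ≤ min 1 (δ ^ (-α) * ‖x‖⁻¹) :=
      le_min zero_le_one (by positivity)
    rw [ballProj, norm_smul, Real.norm_of_nonneg hc]
    calc min 1 (δ ^ (-α) * ‖x‖⁻¹) * ‖x‖ ≤ (δ ^ (-α) * ‖x‖⁻¹) * ‖x‖ := by
          exact mul_le_mul_of_nonneg_right (min_le_right _ _) hxn.le
      _ = δ ^ (-α) := by field_simp

lemma ballProj_inner_le {d : ℕ} {δ α : ℝ} (hδ : 0 < δ) (x z : EuclideanSpace ℝ (Fin d))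
    (hz : ‖z‖ ≤ δ ^ (-α)) : ⟪x - ballProj δ α x, z - ballProj δ α x⟫ ≤ 0 := by
  have hR : 0 < δ ^ (-α) := Real.rpow_pos_of_pos hδ _
  rcases eq_or_ne x 0 with rfl | hx
  · simp [ballProj]
  have hxn : 0 < ‖x‖ := norm_pos_iff.mpr hx
  rcases le_or_gt (δ ^ (-α) * ‖x‖⁻¹) 1 with h | h
  · -- ‖x‖ ≥ R: projection is (R/‖x‖) • x
    have hc : min 1 (δ ^ (-α) * ‖x‖⁻¹) = δ ^ (-α) * ‖x‖⁻¹ := min_eq_right h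
    have hRx : δ ^ (-α) ≤ ‖x‖ := by
      rw [← div_le_one hxn] at *
      simpa [div_eq_mul_inv] using h
    rw [ballProj, hc]
    have h1 : x - (δ ^ (-α) * ‖x‖⁻¹) • x = (1 - δ ^ (-α) * ‖x‖⁻¹) • x := by
      rw [sub_smul, one_smul]
    rw [h1, real_inner_smul_left, inner_sub_right, real_inner_smul_right,
      real_inner_self_eq_norm_sq]
    have hfac : (0:ℝ) ≤ 1 - δ ^ (-α) * ‖x‖⁻¹ := by linarith
    have h2 : ⟪x, z⟫ ≤ δ ^ (-α) * ‖x‖⁻¹ * (‖x‖ * ‖x‖) := by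
      calc ⟪x, z⟫ ≤ ‖x‖ * ‖z‖ := real_inner_le_norm x z
        _ ≤ ‖x‖ * δ ^ (-α) := mul_le_mul_of_nonneg_left hz hxn.le
        _ = δ ^ (-α) * ‖x‖⁻¹ * (‖x‖ * ‖x‖) := by field_simp
    have := sub_nonpos.mpr h2
    exact mul_nonpos_of_nonneg_of_nonpos hfac (by nlinarith [this])
  · have hc : min 1 (δ ^ (-α) * ‖x‖⁻¹) = 1 := min_eq_left h.le
    rw [ballProj, hc, one_smul]
    simp

lemma ballProj_lipschitz {d : ℕ} {δ α : ℝ} (hδ : 0 < δ) (x y : EuclideanSpace ℝ (Fin d)) :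
    ‖ballProj δ α x - ballProj δ α y‖ ≤ ‖x - y‖ := by
  set px := ballProj δ α x
  set py := ballProj δ α y
  have h1 : ⟪x - px, py - px⟫ ≤ 0 := ballProj_inner_le hδ x py (ballProj_norm_le hδ y)
  have h2 : ⟪y - py, px - py⟫ ≤ 0 := ballProj_inner_le hδ y px (ballProj_norm_le hδ x)
  have key : ‖px - py‖ ^ 2 ≤ ⟪x - y, px - py⟫ := by
    have e : ⟪x - y, px - py⟫ - ‖px - py‖ ^ 2
        = -⟪x - px, py - px⟫ - ⟪y - py, px - py⟫ := by
      rw [← real_inner_self_eq_norm_sq]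
      simp only [inner_sub_left, inner_sub_right]
      ring
    nlinarith [e]
  have h3 : ⟪x - y, px - py⟫ ≤ ‖x - y‖ * ‖px - py‖ := real_inner_le_norm _ _
  nlinarith [norm_nonneg (px - py), norm_nonneg (x - y)]

set_option maxHeartbeats 1000000 in
/-- Key stability estimate for the projected Milstein method (Lemma 4.3): under the global
monotonicity condition and the local Lipschitz bound for `f`, there is `C` (depending only
on `L`) such that for all `α ∈ (0, 1/(2(q-1))]` and `δ ∈ (0,1]`,
`|x₁° - x₂° + δ(f(t,x₁°) - f(t,x₂°))|² + 2ηδ ∑_r |gʳ(t,x₁°) - gʳ(t,x₂°)|²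
  ≤ (1 + Cδ)|x₁ - x₂|²`. -/
theorem projected_monotonicity_estimate {d : ℕ} (m : ℕ) (T L η q : ℝ) (hT : 0 < T)
    (hL : 0 < L) (hη : 1 / 2 < η) (hq : 2 ≤ q)
    (f : ℝ → EuclideanSpace ℝ (Fin d) → EuclideanSpace ℝ (Fin d))
    (g : Fin m → ℝ → EuclideanSpace ℝ (Fin d) → EuclideanSpace ℝ (Fin d))
    (hmono : ∀ t ∈ Set.Icc (0 : ℝ) T, ∀ x₁ x₂,
      ⟪f t x₁ - f t x₂, x₁ - x₂⟫ + η * ∑ r, ‖g r t x₁ - g r t x₂‖ ^ 2 ≤ L * ‖x₁ - x₂‖ ^ 2)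
    (hlip : ∀ t ∈ Set.Icc (0 : ℝ) T, ∀ x₁ x₂,
      ‖f t x₁ - f t x₂‖ ≤ L * (1 + ‖x₁‖ + ‖x₂‖) ^ (q - 1) * ‖x₁ - x₂‖) :
    ∃ C > 0, ∀ α δ : ℝ, 0 < α → α ≤ 1 / (2 * (q - 1)) → 0 < δ → δ ≤ 1 →
      ∀ t ∈ Set.Icc (0 : ℝ) T, ∀ x₁ x₂,
      ‖ballProj δ α x₁ - ballProj δ α x₂
          + δ • (f t (ballProj δ α x₁) - f t (ballProj δ α x₂))‖ ^ 2
        + 2 * η * δ * ∑ r, ‖g r t (ballProj δ α x₁) - g r t (ballProj δ α x₂)‖ ^ 2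
      ≤ (1 + C * δ) * ‖x₁ - x₂‖ ^ 2 := by
  have hq1 : (1:ℝ) ≤ q - 1 := by linarith
  set B : ℝ := (3:ℝ) ^ (q - 1) with hB
  have hB0 : 0 < B := Real.rpow_pos_of_pos (by norm_num) _
  refine ⟨2 * L + (L * B) ^ 2, by positivity, ?_⟩
  intro α δ hα hα2 hδ hδ1 t ht x₁ x₂
  set p₁ := ballProj δ α x₁
  set p₂ := ballProj δ α x₂
  set F := f t p₁ - f t p₂ with hF
  set G := ∑ r, ‖g r t p₁ - g r t p₂‖ ^ 2 with hG
  have hR1 : (1:ℝ) ≤ δ ^ (-α) :=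
    Real.one_le_rpow_of_pos_of_le_one_of_nonpos hδ hδ1 (by linarith)
  have hR0 : (0:ℝ) < δ ^ (-α) := lt_of_lt_of_le one_pos hR1
  -- Lipschitz bound on F
  have hnorm1 : ‖p₁‖ ≤ δ ^ (-α) := ballProj_norm_le hδ x₁
  have hnorm2 : ‖p₂‖ ≤ δ ^ (-α) := ballProj_norm_le hδ x₂
  have hbase : (1:ℝ) + ‖p₁‖ + ‖p₂‖ ≤ 3 * δ ^ (-α) := by
    have := norm_nonneg p₁
    linarith
  have hpow : ((1:ℝ) + ‖p₁‖ + ‖p₂‖) ^ (q - 1) ≤ (3 * δ ^ (-α)) ^ (q - 1) :=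
    Real.rpow_le_rpow (by positivity) hbase (by linarith)
  have hmul : ((3:ℝ) * δ ^ (-α)) ^ (q - 1) = B * (δ ^ (-α)) ^ (q - 1) :=
    Real.mul_rpow (by norm_num) hR0.le
  have hexp : (δ ^ (-α) : ℝ) ^ (q - 1) = δ ^ (-(α * (q - 1))) := by
    rw [← Real.rpow_mul hδ.le]
    ring_nf
  set s : ℝ := δ ^ (-(α * (q - 1))) with hs
  have hs0 : 0 < s := Real.rpow_pos_of_pos hδ _
  have hFle : ‖F‖ ≤ L * B * s * ‖p₁ - p₂‖ := by
    calc ‖F‖ ≤ L * ((1:ℝ) + ‖p₁‖ + ‖p₂‖) ^ (q - 1) * ‖p₁ - p₂‖ := hlip t ht p₁ p₂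
      _ ≤ L * (B * s) * ‖p₁ - p₂‖ := by
          apply mul_le_mul_of_nonneg_right _ (norm_nonneg _)
          apply mul_le_mul_of_nonneg_left _ hL.le
          rw [← hexp, ← hmul]
          exact hpow
      _ = L * B * s * ‖p₁ - p₂‖ := by ring
  -- key power bound : δ^2 * s^2 ≤ δ
  have h2a : 2 * (α * (q - 1)) ≤ 1 := by
    have h := (le_div_iff₀ (by positivity : (0:ℝ) < 2 * (q - 1))).mp hα2
    nlinarith
  have hδs : δ ^ 2 * s ^ 2 ≤ δ := by
    have e1 : δ ^ 2 * s ^ 2 = δ ^ ((2:ℝ) - 2 * (α * (q - 1))) := by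
      rw [hs, ← Real.rpow_natCast (δ ^ (-(α * (q - 1)))) 2, ← Real.rpow_natCast δ 2,
        ← Real.rpow_mul hδ.le, ← Real.rpow_add hδ]
      norm_num
      ring_nf
    rw [e1]
    calc δ ^ ((2:ℝ) - 2 * (α * (q - 1))) ≤ δ ^ ((1:ℝ)) :=
          Real.rpow_le_rpow_of_exponent_ge hδ hδ1 (by linarith)
      _ = δ := Real.rpow_one δ
  set a := p₁ - p₂ with ha
  have expand : ‖a + δ • F‖ ^ 2 = ‖a‖ ^ 2 + 2 * (δ * ⟪a, F⟫) + δ ^ 2 * ‖F‖ ^ 2 := by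
    rw [norm_add_sq_real, real_inner_smul_right, norm_smul,
      Real.norm_of_nonneg hδ.le, mul_pow]
  have hin : ⟪a, F⟫ ≤ L * ‖a‖ ^ 2 - η * G := by
    have := hmono t ht p₁ p₂
    rw [real_inner_comm]
    linarith
  have hF2 : δ ^ 2 * ‖F‖ ^ 2 ≤ (L * B) ^ 2 * δ * ‖a‖ ^ 2 := by
    have hK : 0 ≤ L * B * s := by positivity
    have h1 : ‖F‖ ^ 2 ≤ (L * B * s) ^ 2 * ‖a‖ ^ 2 := by
      rw [← mul_pow]
      exact pow_le_pow_left₀ (norm_nonneg _) hFle 2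
    calc δ ^ 2 * ‖F‖ ^ 2 ≤ δ ^ 2 * ((L * B * s) ^ 2 * ‖a‖ ^ 2) := by
          exact mul_le_mul_of_nonneg_left h1 (by positivity)
      _ = (L * B) ^ 2 * (δ ^ 2 * s ^ 2) * ‖a‖ ^ 2 := by ring
      _ ≤ (L * B) ^ 2 * δ * ‖a‖ ^ 2 := by
          apply mul_le_mul_of_nonneg_right _ (by positivity)
          exact mul_le_mul_of_nonneg_left hδs (by positivity)
  have halip : ‖a‖ ≤ ‖x₁ - x₂‖ := ballProj_lipschitz hδ x₁ x₂
  have hasq : ‖a‖ ^ 2 ≤ ‖x₁ - x₂‖ ^ 2 := pow_le_pow_left₀ (norm_nonneg _) halip 2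
  have hC0 : (0:ℝ) ≤ 1 + (2 * L + (L * B) ^ 2) * δ := by positivity
  have hfin := mul_le_mul_of_nonneg_left hasq hC0
  have hin2 := mul_le_mul_of_nonneg_left hin (by positivity : (0:ℝ) ≤ 2 * δ)
  rw [expand]
  linarith [hfin, hin2, hF2]
end

section
/- Under the same assumptions (f continuous, one-sided Lipschitz with constant L, |f(t,0)| ≤ L for all t, δ ∈ (0,1/L), F_δ(t,x) = x - δf(t,x) bijective), the inverse satisfies the growth bound |F_δ^{-1}(t,x)| ≤ (1 - Lδ)^{-1}(Lδ + |x|) for all x ∈ ℝ^d and t ∈ [0,T]. -/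
open scoped RealInnerProductSpace

/-- Growth bound for the inverse of `F_δ(t,x) = x - δ f(t,x)`:
`|F_δ⁻¹(t,x)| ≤ (1 - Lδ)⁻¹ (Lδ + |x|)`. -/
theorem Finv_growth {d : ℕ} (T L δ : ℝ) (hT : 0 < T) (hL : 0 < L)
    (hδ : 0 < δ) (hδL : δ < 1 / L)
    (f : ℝ → EuclideanSpace ℝ (Fin d) → EuclideanSpace ℝ (Fin d))
    (hcont : ∀ t ∈ Set.Icc (0 : ℝ) T, Continuous (f t))
    (hone : ∀ t ∈ Set.Icc (0 : ℝ) T, ∀ x₁ x₂,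
      ⟪f t x₁ - f t x₂, x₁ - x₂⟫ ≤ L * ‖x₁ - x₂‖ ^ 2)
    (h0 : ∀ t ∈ Set.Icc (0 : ℝ) T, ‖f t 0‖ ≤ L)
    (hbij : ∀ t ∈ Set.Icc (0 : ℝ) T, Function.Bijective (fun x => x - δ • f t x)) :
    ∀ t ∈ Set.Icc (0 : ℝ) T, ∀ x : EuclideanSpace ℝ (Fin d),
      ‖Function.invFun (fun y => y - δ • f t y) x‖ ≤ (1 - L * δ)⁻¹ * (L * δ + ‖x‖) := by
  intro t ht x
  set y := Function.invFun (fun y => y - δ • f t y) x with hy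
  have hyx : y - δ • f t y = x := by
    have := Function.rightInverse_invFun (hbij t ht).2 x
    simpa [hy] using this
  have hLδ : 1 - L * δ > 0 := by
    have := (lt_div_iff₀ hL).mp hδL
    nlinarith
  rcases eq_or_ne y 0 with h0y | h0y
  · rw [h0y]
    simp only [norm_zero]
    positivity
  have hny : 0 < ‖y‖ := norm_pos_iff.mpr h0y
  have key : ‖y‖ ^ 2 ≤ ‖x‖ * ‖y‖ + δ * (L * ‖y‖ ^ 2) + δ * (L * ‖y‖) := by
    have hxy : (y : EuclideanSpace ℝ (Fin d)) = x + δ • f t y := by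
      rw [← hyx]; abel
    have h1 : ⟪x, y⟫ ≤ ‖x‖ * ‖y‖ := real_inner_le_norm x y
    have h2 : ⟪f t y - f t 0, y - 0⟫ ≤ L * ‖y - 0‖ ^ 2 := hone t ht y 0
    simp only [sub_zero] at h2
    have h3 : ⟪f t 0, y⟫ ≤ L * ‖y‖ := by
      calc ⟪f t 0, y⟫ ≤ ‖f t 0‖ * ‖y‖ := real_inner_le_norm _ _
        _ ≤ L * ‖y‖ := mul_le_mul_of_nonneg_right (h0 t ht) (norm_nonneg _)
    have e1 : ‖y‖ ^ 2 = ⟪x, y⟫ + δ * ⟪f t y - f t 0, y⟫ + δ * ⟪f t 0, y⟫ := by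
      rw [← real_inner_self_eq_norm_sq]
      nth_rewrite 1 [hxy]
      rw [inner_add_left, real_inner_smul_left, inner_sub_left]
      ring
    have := mul_le_mul_of_nonneg_left h2 hδ.le
    have := mul_le_mul_of_nonneg_left h3 hδ.le
    linarith
  have step : (1 - L * δ) * ‖y‖ ≤ L * δ + ‖x‖ := by
    nlinarith
  calc ‖y‖ = (1 - L * δ)⁻¹ * ((1 - L * δ) * ‖y‖) := (inv_mul_cancel_left₀ hLδ.ne' _).symm
    _ ≤ (1 - L * δ)⁻¹ * (L * δ + ‖x‖) :=
        mul_le_mul_of_nonneg_left step (inv_pos.mpr hLδ).le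
end

section
/- Let f, g^r (r=1,…,m), and h^{r₁,r₂} (r₁,r₂ = 1,…,m) be functions from [0,T] × ℝ^d to ℝ^d with f continuous and satisfying, for constants L > 0, η₁ > 1, η₂ > 0: ⟨f(t,x₁)-f(t,x₂), x₁-x₂⟩ + η₁ ∑_r |g^r(t,x₁)-g^r(t,x₂)|² + η₂ ∑_{r₁,r₂} |h^{r₁,r₂}(t,x₁)-h^{r₁,r₂}(t,x₂)|² ≤ L|x₁-x₂|². Fix δ ∈ (0, h̄] with h̄ < 1/L, and let F_δ(t,x) = x - δf(t,x), which is a bijection in x. Then with C₁ = L(2-Lh̄)(1-Lh̄)^{-2}: |F_δ^{-1}(t,x₁)-F_δ^{-1}(t,x₂)|² + η₁δ ∑_r |g^r(t,F_δ^{-1}(t,x₁)) - g^r(t,F_δ^{-1}(t,x₂))|² + η₂δ ∑_{r₁,r₂} |h^{r₁,r₂}(t,F_δ^{-1}(t,x₁)) - h^{r₁,r₂}(t,F_δ^{-1}(t,x₂))|² ≤ (1 + C₁δ)|x₁-x₂|² for all x₁, x₂ ∈ ℝ^d, t ∈ [0,T]. -/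
open scoped RealInnerProductSpace

private lemma ssbm_aux (L η₁ η₂ δ a nY nX P I S₁ S₂ : ℝ)
    (hδ : 0 < δ) (hη₁ : 0 < η₁) (hη₂ : 0 < η₂) (hS₁0 : 0 ≤ S₁) (hS₂0 : 0 ≤ S₂)
    (ha : a = L * δ) (ha0 : 0 < a) (ha1 : a < 1)
    (hnY : 0 ≤ nY) (hnX : 0 ≤ nX)
    (hm : I + η₁ * S₁ + η₂ * S₂ ≤ L * nY ^ 2)
    (hi : nY ^ 2 = P + δ * I)
    (hcs : P ≤ nY * nX) :
    nY ^ 2 + δ * (η₁ * S₁ + η₂ * S₂) ≤ ((1 - a) ^ 2)⁻¹ * nX ^ 2 := by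
  have h1a : (0:ℝ) < 1 - a := by linarith
  have hmain : nY ^ 2 + δ * (η₁ * S₁ + η₂ * S₂) ≤ nY * nX + a * nY ^ 2 := by
    have : δ * (I + η₁ * S₁ + η₂ * S₂) ≤ δ * (L * nY ^ 2) :=
      mul_le_mul_of_nonneg_left hm hδ.le
    nlinarith
  have hLip : (1 - a) * nY ≤ nX := by
    rcases eq_or_lt_of_le hnY with h0 | h0
    · rw [← h0]; simpa using hnX
    · have hS : 0 ≤ δ * (η₁ * S₁ + η₂ * S₂) := by positivity
      have h2 : nY * ((1 - a) * nY) ≤ nY * nX := by nlinarith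
      exact (mul_le_mul_iff_right₀ h0).mp h2
  have hY2 : nY ^ 2 ≤ ((1 - a) ^ 2)⁻¹ * nX ^ 2 := by
    rw [inv_mul_eq_div, le_div_iff₀ (by positivity)]
    nlinarith [mul_le_mul hLip hLip (mul_nonneg h1a.le hnY) hnX]
  have hYX : nY * nX ≤ (1 - a)⁻¹ * nX ^ 2 := by
    rw [inv_mul_eq_div, le_div_iff₀ h1a]
    nlinarith
  have hcomb : (1 - a)⁻¹ * nX ^ 2 + a * (((1 - a) ^ 2)⁻¹ * nX ^ 2)
      = ((1 - a) ^ 2)⁻¹ * nX ^ 2 := by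
    field_simp; ring
  have h2 : a * nY ^ 2 ≤ a * (((1 - a) ^ 2)⁻¹ * nX ^ 2) :=
    mul_le_mul_of_nonneg_left hY2 ha0.le
  linarith

private lemma ssbm_poly (a b : ℝ) (L δ : ℝ) (ha : a = L * δ) (hb : b = L * hbar)
    (hδ : 0 < δ) (ha0 : 0 < a) (hab : a ≤ b) (hb1 : b < 1) :
    ((1 - a) ^ 2)⁻¹ ≤ 1 + (L * (2 - b) * ((1 - b) ^ 2)⁻¹) * δ := by
  have h1a : (0:ℝ) < 1 - a := by linarith
  have h1b : (0:ℝ) < 1 - b := by linarith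
  have hC : (1:ℝ) + (L * (2 - b) * ((1 - b) ^ 2)⁻¹) * δ
      = ((1 - b) ^ 2 + a * (2 - b)) / (1 - b) ^ 2 := by
    field_simp [ha]; linear_combination (b - 2) * ha
  rw [hC, inv_eq_one_div, div_le_div_iff₀ (by positivity) (by positivity)]
  have hfac : 0 ≤ a * (b - a) * ((3 - 2*b) - (2 - b) * a) := by
    have h3 : 0 ≤ (3 - 2*b) - (2 - b) * a := by nlinarith
    have hba : 0 ≤ b - a := by linarith
    positivity
  nlinarith [hfac]

/-- Key stability estimate for the split-step backward Milstein method (inequality (6.3)):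
under the strengthened monotonicity condition involving `f`, `gʳ` and `h^{r₁,r₂}`,
`|F_δ⁻¹(t,x₁) - F_δ⁻¹(t,x₂)|² + η₁δ ∑_r |gʳ∘F_δ⁻¹ - ...|² + η₂δ ∑_{r₁,r₂} |h∘F_δ⁻¹ - ...|²
  ≤ (1 + C₁δ)|x₁ - x₂|²` with `C₁ = L(2 - Lh̄)(1 - Lh̄)⁻²`. -/
theorem ssbm_stability_estimate {d : ℕ} (m : ℕ) (T L η₁ η₂ hbar δ : ℝ) (hT : 0 < T)
    (hL : 0 < L) (hη₁ : 1 < η₁) (hη₂ : 0 < η₂)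
    (hhbar : 0 < hbar) (hhbar1 : hbar < 1 / L) (hδ : 0 < δ) (hδbar : δ ≤ hbar)
    (f : ℝ → EuclideanSpace ℝ (Fin d) → EuclideanSpace ℝ (Fin d))
    (g : Fin m → ℝ → EuclideanSpace ℝ (Fin d) → EuclideanSpace ℝ (Fin d))
    (h : Fin m → Fin m → ℝ → EuclideanSpace ℝ (Fin d) → EuclideanSpace ℝ (Fin d))
    (hcont : ∀ t ∈ Set.Icc (0 : ℝ) T, Continuous (f t))
    (hmono : ∀ t ∈ Set.Icc (0 : ℝ) T, ∀ x₁ x₂,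
      ⟪f t x₁ - f t x₂, x₁ - x₂⟫ + η₁ * ∑ r, ‖g r t x₁ - g r t x₂‖ ^ 2
        + η₂ * ∑ r₁, ∑ r₂, ‖h r₁ r₂ t x₁ - h r₁ r₂ t x₂‖ ^ 2 ≤ L * ‖x₁ - x₂‖ ^ 2)
    (hbij : ∀ t ∈ Set.Icc (0 : ℝ) T, Function.Bijective (fun x => x - δ • f t x)) :
    ∀ t ∈ Set.Icc (0 : ℝ) T, ∀ x₁ x₂ : EuclideanSpace ℝ (Fin d),
      ‖Function.invFun (fun x => x - δ • f t x) x₁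
          - Function.invFun (fun x => x - δ • f t x) x₂‖ ^ 2
        + η₁ * δ * ∑ r, ‖g r t (Function.invFun (fun x => x - δ • f t x) x₁)
            - g r t (Function.invFun (fun x => x - δ • f t x) x₂)‖ ^ 2
        + η₂ * δ * ∑ r₁, ∑ r₂,
            ‖h r₁ r₂ t (Function.invFun (fun x => x - δ • f t x) x₁)
              - h r₁ r₂ t (Function.invFun (fun x => x - δ • f t x) x₂)‖ ^ 2
      ≤ (1 + (L * (2 - L * hbar) * ((1 - L * hbar) ^ 2)⁻¹) * δ) * ‖x₁ - x₂‖ ^ 2 := by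
  intro t ht x₁ x₂
  set y₁ := Function.invFun (fun x => x - δ • f t x) x₁ with hy₁
  set y₂ := Function.invFun (fun x => x - δ • f t x) x₂ with hy₂
  have hFy₁ : y₁ - δ • f t y₁ = x₁ :=
    Function.rightInverse_invFun (hbij t ht).surjective x₁
  have hFy₂ : y₂ - δ • f t y₂ = x₂ :=
    Function.rightInverse_invFun (hbij t ht).surjective x₂
  set S₁ := ∑ r, ‖g r t y₁ - g r t y₂‖ ^ 2 with hS₁
  set S₂ := ∑ r₁, ∑ r₂, ‖h r₁ r₂ t y₁ - h r₁ r₂ t y₂‖ ^ 2 with hS₂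
  have hS₁0 : 0 ≤ S₁ := Finset.sum_nonneg fun r _ => sq_nonneg _
  have hS₂0 : 0 ≤ S₂ := Finset.sum_nonneg fun r _ => Finset.sum_nonneg fun r' _ => sq_nonneg _
  have hab : L * δ ≤ L * hbar := by nlinarith
  have hb1 : L * hbar < 1 := by
    have := (lt_div_iff₀ hL).mp hhbar1
    nlinarith
  have ha0 : 0 < L * δ := by positivity
  -- key identity
  have hid : y₁ - y₂ = (x₁ - x₂) + δ • (f t y₁ - f t y₂) := by
    rw [← hFy₁, ← hFy₂]; module
  have hinner : ‖y₁ - y₂‖ ^ 2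
      = ⟪y₁ - y₂, x₁ - x₂⟫ + δ * ⟪f t y₁ - f t y₂, y₁ - y₂⟫ := by
    have h2 : ⟪y₁ - y₂, y₁ - y₂⟫
        = ⟪y₁ - y₂, (x₁ - x₂) + δ • (f t y₁ - f t y₂)⟫ := by
      exact congrArg (fun v => ⟪y₁ - y₂, v⟫) hid
    rw [← real_inner_self_eq_norm_sq, h2, inner_add_right, real_inner_smul_right,
      real_inner_comm (y₁ - y₂)]
  have hmono' := hmono t ht y₁ y₂
  have hCS : ⟪y₁ - y₂, x₁ - x₂⟫ ≤ ‖y₁ - y₂‖ * ‖x₁ - x₂‖ := real_inner_le_norm _ _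
  have hchain : ‖y₁ - y₂‖ ^ 2 + δ * (η₁ * S₁ + η₂ * S₂)
      ≤ ((1 - L * δ) ^ 2)⁻¹ * ‖x₁ - x₂‖ ^ 2 :=
    ssbm_aux L η₁ η₂ δ (L * δ) ‖y₁ - y₂‖ ‖x₁ - x₂‖ ⟪y₁ - y₂, x₁ - x₂⟫
      ⟪f t y₁ - f t y₂, y₁ - y₂⟫ S₁ S₂ hδ (by linarith) hη₂ hS₁0 hS₂0 rfl ha0
      (lt_of_le_of_lt hab hb1) (norm_nonneg _) (norm_nonneg _) (by linarith [hmono'])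
      hinner hCS
  have hpoly := ssbm_poly (L * δ) (L * hbar) L δ rfl rfl hδ ha0 hab hb1
  have hfin : ((1 - L * δ) ^ 2)⁻¹ * ‖x₁ - x₂‖ ^ 2
      ≤ (1 + (L * (2 - L * hbar) * ((1 - L * hbar) ^ 2)⁻¹) * δ) * ‖x₁ - x₂‖ ^ 2 :=
    mul_le_mul_of_nonneg_right hpoly (by positivity)
  calc ‖y₁ - y₂‖ ^ 2 + η₁ * δ * S₁ + η₂ * δ * S₂
      = ‖y₁ - y₂‖ ^ 2 + δ * (η₁ * S₁ + η₂ * S₂) := by ring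
    _ ≤ ((1 - L * δ) ^ 2)⁻¹ * ‖x₁ - x₂‖ ^ 2 := hchain
    _ ≤ _ := hfin
end

section
/- Let f : [0,T] × ℝ^d → ℝ^d be continuous with one-sided Lipschitz constant L > 0 and polynomial growth |f(t,x)| ≤ L(1+|x|)^q for q ≥ 2. Let h̄ ∈ (0,1/L), δ ∈ (0,h̄], and F_δ(t,x) = x - δf(t,x), a bijection in x. Then there exists a constant C₂ depending only on L, h̄, q such that |F_δ^{-1}(t,x) - x| ≤ δ C₂ (1 + |x|^q) for all x ∈ ℝ^d, t ∈ [0,T]. -/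
open scoped RealInnerProductSpace

set_option maxHeartbeats 1600000 in
/-- First-order estimate for the inverse: `|F_δ⁻¹(t,x) - x| ≤ δ C₂ (1 + |x|^q)`. -/
theorem Finv_first_order {d : ℕ} (T L q hbar δ : ℝ) (hT : 0 < T) (hL : 0 < L) (hq : 2 ≤ q)
    (hhbar : 0 < hbar) (hhbar1 : hbar < 1 / L) (hδ : 0 < δ) (hδbar : δ ≤ hbar)
    (f : ℝ → EuclideanSpace ℝ (Fin d) → EuclideanSpace ℝ (Fin d))
    (hcont : ∀ t ∈ Set.Icc (0 : ℝ) T, Continuous (f t))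
    (hone : ∀ t ∈ Set.Icc (0 : ℝ) T, ∀ x₁ x₂,
      ⟪f t x₁ - f t x₂, x₁ - x₂⟫ ≤ L * ‖x₁ - x₂‖ ^ 2)
    (hgrowth : ∀ t ∈ Set.Icc (0 : ℝ) T, ∀ x, ‖f t x‖ ≤ L * (1 + ‖x‖) ^ q)
    (hbij : ∀ t ∈ Set.Icc (0 : ℝ) T, Function.Bijective (fun x => x - δ • f t x)) :
    ∃ C₂ > 0, ∀ t ∈ Set.Icc (0 : ℝ) T, ∀ x : EuclideanSpace ℝ (Fin d),
      ‖Function.invFun (fun y => y - δ • f t y) x - x‖ ≤ δ * C₂ * (1 + ‖x‖ ^ q) := by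
  have hLhbar : hbar * L < 1 := by
    rw [lt_div_iff₀ hL] at hhbar1; linarith
  set m : ℝ := 1 - hbar * L with hm
  have hm0 : 0 < m := by simp only [hm]; linarith
  set c : ℝ := 1 + hbar * L / m + 1 / m with hc
  have hc0 : 0 < c := by positivity
  have hmc : m * c = m + hbar * L + 1 := by
    rw [hc, mul_add, mul_add, mul_one, mul_div_cancel₀ _ hm0.ne', mul_one_div,
      div_self hm0.ne']
  clear_value m c
  have hq0 : (0:ℝ) ≤ q := by linarith
  refine ⟨L * (2 * c) ^ q, by positivity, ?_⟩
  intro t ht x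
  set g := fun y : EuclideanSpace ℝ (Fin d) => y - δ • f t y with hg
  have hb := hbij t ht
  set y := Function.invFun g x with hy
  have hgy : y - δ • f t y = x := Function.rightInverse_invFun hb.2 x
  have hxy : y - x = δ • f t y := by
    rw [← hgy]; abel
  clear_value y
  clear_value g
  -- inner product bound
  have h2 : ‖f t 0‖ ≤ L := by
    have := hgrowth t ht 0
    simpa using this
  have hinner : ⟪f t y, y⟫ ≤ L * ‖y‖ ^ 2 + L * ‖y‖ := by
    have h1 := hone t ht y 0
    simp only [sub_zero] at h1
    have h3 : ⟪f t 0, y⟫ ≤ ‖f t 0‖ * ‖y‖ := real_inner_le_norm _ _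
    have h4 : ⟪f t y, y⟫ = ⟪f t y - f t 0, y⟫ + ⟪f t 0, y⟫ := by
      rw [inner_sub_left]; ring
    nlinarith [norm_nonneg y]
  have hxyi : ⟪x, y⟫ = ‖y‖ ^ 2 - δ * ⟪f t y, y⟫ := by
    rw [← hgy, inner_sub_left, real_inner_smul_left, real_inner_self_eq_norm_sq]
  have hy2 : ‖y‖ ^ 2 ≤ ‖x‖ * ‖y‖ + δ * (L * ‖y‖ ^ 2 + L * ‖y‖) := by
    have h5 : ⟪x, y⟫ ≤ ‖x‖ * ‖y‖ := real_inner_le_norm _ _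
    nlinarith [hinner, hδ]
  have hδL : δ * L ≤ hbar * L := mul_le_mul_of_nonneg_right hδbar hL.le
  have hym : m * ‖y‖ ≤ ‖x‖ + hbar * L := by
    rcases eq_or_lt_of_le (norm_nonneg y) with h0 | h0
    · rw [← h0]; nlinarith [norm_nonneg x, hhbar, hL]
    · nlinarith [hy2, h0, hδL, norm_nonneg x]
  have hyx : 1 + ‖y‖ ≤ c * (1 + ‖x‖) := by
    have key : m * (1 + ‖y‖) ≤ m * (c * (1 + ‖x‖)) := by
      have : m * (c * (1 + ‖x‖)) = (m + hbar * L + 1) * (1 + ‖x‖) := by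
        rw [← mul_assoc, hmc]
      rw [this]
      nlinarith [hym, norm_nonneg x, hhbar, hL]
    exact le_of_mul_le_mul_left key hm0
  -- rpow estimates
  have hA : (1 + ‖y‖) ^ q ≤ c ^ q * (1 + ‖x‖) ^ q := by
    rw [← Real.mul_rpow hc0.le (by positivity)]
    exact Real.rpow_le_rpow (by positivity) hyx hq0
  have h2q : (0:ℝ) ≤ (2:ℝ) ^ q := Real.rpow_nonneg (by norm_num) q
  have hxq : (1 + ‖x‖) ^ q ≤ 2 ^ q * (1 + ‖x‖ ^ q) := by
    have hxq0 : (0:ℝ) ≤ ‖x‖ ^ q := Real.rpow_nonneg (norm_nonneg x) q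
    rcases le_total ‖x‖ 1 with h | h
    · have : (1 + ‖x‖) ^ q ≤ (2:ℝ) ^ q :=
        Real.rpow_le_rpow (by positivity) (by linarith) hq0
      nlinarith
    · have h1 : (1 + ‖x‖) ^ q ≤ (2 * ‖x‖) ^ q :=
        Real.rpow_le_rpow (by positivity) (by linarith) hq0
      rw [Real.mul_rpow (by norm_num) (norm_nonneg x)] at h1
      nlinarith
  have hfty : ‖f t y‖ ≤ L * (1 + ‖y‖) ^ q := hgrowth t ht y
  have hnorm : ‖y - x‖ = δ * ‖f t y‖ := by
    rw [hxy, norm_smul, Real.norm_eq_abs, abs_of_pos hδ]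
  rw [hnorm]
  have hfin : ‖f t y‖ ≤ L * (2 * c) ^ q * (1 + ‖x‖ ^ q) := by
    have hcq : (0:ℝ) ≤ c ^ q := Real.rpow_nonneg hc0.le q
    have h2c : (2 * c) ^ q = 2 ^ q * c ^ q := Real.mul_rpow (by norm_num) hc0.le
    calc ‖f t y‖ ≤ L * (1 + ‖y‖) ^ q := hfty
      _ ≤ L * (c ^ q * (1 + ‖x‖) ^ q) := by
          exact mul_le_mul_of_nonneg_left hA hL.le
      _ ≤ L * (c ^ q * (2 ^ q * (1 + ‖x‖ ^ q))) := by
          have := mul_le_mul_of_nonneg_left hxq hcq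
          exact mul_le_mul_of_nonneg_left this hL.le
      _ = L * (2 * c) ^ q * (1 + ‖x‖ ^ q) := by rw [h2c]; ring
  calc δ * ‖f t y‖ ≤ δ * (L * (2 * c) ^ q * (1 + ‖x‖ ^ q)) :=
        mul_le_mul_of_nonneg_left hfin hδ.le
    _ = δ * (L * (2 * c) ^ q) * (1 + ‖x‖ ^ q) := by ring
end

section
/- Let f : [0,T] × ℝ^d → ℝ^d be continuous with one-sided Lipschitz constant L > 0, satisfy |f(t,x)| ≤ L(1+|x|)^q and the local Lipschitz bound |f(t,x₁)-f(t,x₂)| ≤ L(1+|x₁|+|x₂|)^{q-1}|x₁-x₂| with q ≥ 2. Let h̄ ∈ (0,1/L), δ ∈ (0,h̄], F_δ(t,x) = x - δf(t,x). Then there exists a constant C₃ depending only on L, h̄, q such that |F_δ^{-1}(t,x) - x - δf(t,x)| ≤ δ² C₃ (1 + |x|^{2q-1}) for all x ∈ ℝ^d, t ∈ [0,T]. -/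
open scoped RealInnerProductSpace

/-- `(1+a)^p ≤ 2^p (1 + a^p)` for `a ≥ 0`, `p ≥ 0` (real powers). -/
lemma one_add_rpow_le (a p : ℝ) (ha : 0 ≤ a) (hp : 0 ≤ p) :
    (1 + a) ^ p ≤ 2 ^ p * (1 + a ^ p) := by
  rcases le_total a 1 with h | h
  · have h1 : (1 + a) ^ p ≤ 2 ^ p :=
      Real.rpow_le_rpow (by linarith) (by linarith) hp
    have h2 : (0:ℝ) ≤ a ^ p := Real.rpow_nonneg ha p
    nlinarith [Real.rpow_pos_of_pos (show (0:ℝ) < 2 by norm_num) p]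
  · have h1 : (1 + a) ^ p ≤ (2 * a) ^ p :=
      Real.rpow_le_rpow (by linarith) (by linarith) hp
    have h2 : (2 * a) ^ p = 2 ^ p * a ^ p :=
      Real.mul_rpow (by norm_num) ha
    have h3 : (0:ℝ) < 2 ^ p := Real.rpow_pos_of_pos (by norm_num) p
    nlinarith

set_option maxHeartbeats 1600000 in
/-- Second-order estimate for the inverse:
`|F_δ⁻¹(t,x) - x - δ f(t,x)| ≤ δ² C₃ (1 + |x|^(2q-1))`. -/
theorem Finv_second_order {d : ℕ} (T L q hbar δ : ℝ) (hT : 0 < T) (hL : 0 < L) (hq : 2 ≤ q)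
    (hhbar : 0 < hbar) (hhbar1 : hbar < 1 / L) (hδ : 0 < δ) (hδbar : δ ≤ hbar)
    (f : ℝ → EuclideanSpace ℝ (Fin d) → EuclideanSpace ℝ (Fin d))
    (hcont : ∀ t ∈ Set.Icc (0 : ℝ) T, Continuous (f t))
    (hone : ∀ t ∈ Set.Icc (0 : ℝ) T, ∀ x₁ x₂,
      ⟪f t x₁ - f t x₂, x₁ - x₂⟫ ≤ L * ‖x₁ - x₂‖ ^ 2)
    (hgrowth : ∀ t ∈ Set.Icc (0 : ℝ) T, ∀ x, ‖f t x‖ ≤ L * (1 + ‖x‖) ^ q)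
    (hlip : ∀ t ∈ Set.Icc (0 : ℝ) T, ∀ x₁ x₂,
      ‖f t x₁ - f t x₂‖ ≤ L * (1 + ‖x₁‖ + ‖x₂‖) ^ (q - 1) * ‖x₁ - x₂‖)
    (hbij : ∀ t ∈ Set.Icc (0 : ℝ) T, Function.Bijective (fun x => x - δ • f t x)) :
    ∃ C₃ > 0, ∀ t ∈ Set.Icc (0 : ℝ) T, ∀ x : EuclideanSpace ℝ (Fin d),
      ‖Function.invFun (fun y => y - δ • f t y) x - x - δ • f t x‖ ≤
        δ ^ 2 * C₃ * (1 + ‖x‖ ^ (2 * q - 1)) := by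
  have hLh : hbar * L < 1 := (lt_div_iff₀ hL).mp hhbar1
  have hden : 0 < 1 - hbar * L := by linarith
  set K : ℝ := 1 / (1 - hbar * L) with hKdef
  have hK0 : 0 < K := by positivity
  have hK1 : 1 ≤ K := by
    rw [hKdef, le_div_iff₀ hden]; nlinarith [mul_pos hhbar hL]
  refine ⟨L * L * (2 + K) ^ (q - 1) * (1 + K) ^ q * 2 ^ (2 * q - 1), by positivity, ?_⟩
  intro t ht x
  obtain ⟨y, hy⟩ := (hbij t ht).surjective x
  have hy' : y - δ • f t y = x := hy
  have hinv : Function.invFun (fun y => y - δ • f t y) x = y := by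
    rw [← hy]; exact Function.leftInverse_invFun (hbij t ht).injective y
  have hyx : y - x = δ • f t y := by rw [← hy']; exact sub_sub_cancel y (δ • f t y)
  have hnyx : ‖y - x‖ = δ * ‖f t y‖ := by
    rw [hyx, norm_smul, Real.norm_of_nonneg hδ.le]
  -- bound ‖y‖ linearly in ‖x‖
  have hf0 : ‖f t 0‖ ≤ L := by
    have := hgrowth t ht 0
    simpa [Real.one_rpow] using this
  have honey : ⟪f t y - f t 0, y - 0⟫ ≤ L * ‖y - 0‖ ^ 2 := hone t ht y 0
  have hinner1 : ⟪f t y, y⟫ - ⟪f t 0, y⟫ ≤ L * ‖y‖ ^ 2 := by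
    simpa [inner_sub_left] using honey
  have hinner2 : ⟪f t 0, y⟫ ≤ ‖f t 0‖ * ‖y‖ := real_inner_le_norm _ _
  have hinner3 : ‖y‖ ^ 2 - ⟪x, y⟫ = δ * ⟪f t y, y⟫ := by
    have : ⟪y - x, y⟫ = δ * ⟪f t y, y⟫ := by rw [hyx, real_inner_smul_left]
    rw [← this, inner_sub_left, real_inner_self_eq_norm_sq]
  have hinner4 : ⟪x, y⟫ ≤ ‖x‖ * ‖y‖ := real_inner_le_norm _ _
  have hδL : δ * L ≤ hbar * L := by nlinarith
  have hsq : ‖y‖ ^ 2 * (1 - hbar * L) ≤ (1 + ‖x‖) * ‖y‖ := by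
    nlinarith [norm_nonneg y, norm_nonneg x, sq_nonneg (‖y‖), hδ.le,
      mul_le_mul_of_nonneg_right hδL (sq_nonneg ‖y‖),
      mul_le_mul_of_nonneg_left hf0 hδ.le, mul_le_mul_of_nonneg_left hinner2 hδ.le]
  have hylin : ‖y‖ ≤ K * (1 + ‖x‖) := by
    rcases (norm_nonneg y).eq_or_lt with h0 | h0
    · rw [← h0]; positivity
    · rw [hKdef, div_mul_eq_mul_div, le_div_iff₀ hden]
      have h' : ‖y‖ * (1 - hbar * L) * ‖y‖ ≤ (1 + ‖x‖) * ‖y‖ := by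
        have := hsq; rw [sq] at this; ring_nf at this ⊢; exact this
      have := le_of_mul_le_mul_right h' h0
      linarith
  have hx1 : (0:ℝ) < 1 + ‖x‖ := by positivity
  -- base inequalities
  have hbase1 : 1 + ‖y‖ + ‖x‖ ≤ (2 + K) * (1 + ‖x‖) := by
    nlinarith [norm_nonneg x]
  have hbase2 : 1 + ‖y‖ ≤ (1 + K) * (1 + ‖x‖) := by
    nlinarith [norm_nonneg x]
  have hq1 : (0:ℝ) ≤ q - 1 := by linarith
  have hq0 : (0:ℝ) ≤ q := by linarith
  have hA : (1 + ‖y‖ + ‖x‖) ^ (q - 1) ≤ (2 + K) ^ (q - 1) * (1 + ‖x‖) ^ (q - 1) := by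
    rw [← Real.mul_rpow (by positivity) hx1.le]
    exact Real.rpow_le_rpow (by positivity) hbase1 hq1
  have hB : (1 + ‖y‖) ^ q ≤ (1 + K) ^ q * (1 + ‖x‖) ^ q := by
    rw [← Real.mul_rpow (by positivity) hx1.le]
    exact Real.rpow_le_rpow (by positivity) hbase2 hq0
  have hfy : ‖f t y‖ ≤ L * ((1 + K) ^ q * (1 + ‖x‖) ^ q) :=
    le_trans (hgrowth t ht y) (mul_le_mul_of_nonneg_left hB hL.le)
  have hmain : ‖f t y - f t x‖ ≤
      L * ((2 + K) ^ (q - 1) * (1 + ‖x‖) ^ (q - 1)) *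
        (δ * (L * ((1 + K) ^ q * (1 + ‖x‖) ^ q))) := by
    calc ‖f t y - f t x‖ ≤ L * (1 + ‖y‖ + ‖x‖) ^ (q - 1) * ‖y - x‖ := hlip t ht y x
      _ = L * (1 + ‖y‖ + ‖x‖) ^ (q - 1) * (δ * ‖f t y‖) := by rw [hnyx]
      _ ≤ _ := by
          apply mul_le_mul (mul_le_mul_of_nonneg_left hA hL.le)
            (mul_le_mul_of_nonneg_left hfy hδ.le) (by positivity) (by positivity)
  have hgoal : Function.invFun (fun y => y - δ • f t y) x - x - δ • f t x
      = δ • (f t y - f t x) := by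
    rw [hinv, smul_sub, ← hyx]
  rw [hgoal, norm_smul, Real.norm_of_nonneg hδ.le]
  have hadd : (1 + ‖x‖) ^ (q - 1) * (1 + ‖x‖) ^ q = (1 + ‖x‖) ^ (2 * q - 1) := by
    rw [← Real.rpow_add hx1]; ring_nf
  have hpow := one_add_rpow_le ‖x‖ (2 * q - 1) (norm_nonneg x) (by linarith)
  calc δ * ‖f t y - f t x‖
      ≤ δ * (L * ((2 + K) ^ (q - 1) * (1 + ‖x‖) ^ (q - 1)) *
        (δ * (L * ((1 + K) ^ q * (1 + ‖x‖) ^ q)))) :=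
        mul_le_mul_of_nonneg_left hmain hδ.le
    _ = δ ^ 2 * (L * L * (2 + K) ^ (q - 1) * (1 + K) ^ q) *
        ((1 + ‖x‖) ^ (q - 1) * (1 + ‖x‖) ^ q) := by ring
    _ = δ ^ 2 * (L * L * (2 + K) ^ (q - 1) * (1 + K) ^ q) * (1 + ‖x‖) ^ (2 * q - 1) := by
        rw [hadd]
    _ ≤ δ ^ 2 * (L * L * (2 + K) ^ (q - 1) * (1 + K) ^ q) *
        (2 ^ (2 * q - 1) * (1 + ‖x‖ ^ (2 * q - 1))) :=
        mul_le_mul_of_nonneg_left hpow (by positivity)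
    _ = δ ^ 2 * (L * L * (2 + K) ^ (q - 1) * (1 + K) ^ q * 2 ^ (2 * q - 1)) *
        (1 + ‖x‖ ^ (2 * q - 1)) := by ring
end
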